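/- The set M_n = {{a+Δ/3, a+2Δ/3} : [a, a+Δ] ∈ 𝒞_{n−1}}, for n ≥ 1, forms an independent set of edges (a matching) in the subgraph G* = (C*, E*) of the whirl graph, and moreover M = ⋃_{n≥1} M_n is a matching in G*. -/

import Mathlib

open SimpleGraph

/-- The `n`-th vertex level of the whirl graph: `V_n = {i/3^n : 0 ≤ i ≤ 3^n}`. -/
def Vn (n : ℕ) : Set ℚ := {q | ∃ i : ℕ, i ≤ 3 ^ n ∧ q = (i : ℚ) / 3 ^ n}

/-- The `n`-th edge level of the whirl graph. -/
def En (n : ℕ) : Set (Sym2 ℚ) :=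
  {e | ∃ k : ℕ, k < 3 ^ (n - 1) ∧
    (e = s(((3 * k : ℕ) : ℚ) / 3 ^ n, ((3 * k + 2 : ℕ) : ℚ) / 3 ^ n) ∨
     e = s(((3 * k + 1 : ℕ) : ℚ) / 3 ^ n, ((3 * k + 2 : ℕ) : ℚ) / 3 ^ n) ∨
     e = s(((3 * k + 1 : ℕ) : ℚ) / 3 ^ n, ((3 * k + 3 : ℕ) : ℚ) / 3 ^ n))}

/-- The vertex set `V = ⋃_{n ≥ 1} V_n` of the whirl graph. -/
def whirlV : Set ℚ := ⋃ n ≥ 1, Vn n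

/-- The whirl graph `G`, as a simple graph on `ℚ` with edge set `⋃_{n ≥ 1} E_n`. -/
def whirl : SimpleGraph ℚ := fromEdgeSet (⋃ n ≥ 1, En n)

/-- `G_{≤ n} = (V_n, E_1 ∪ ⋯ ∪ E_n)`. -/
def Gle (n : ℕ) : SimpleGraph ℚ := fromEdgeSet (⋃ k ∈ Set.Icc 1 n, En k)

/-- `G_{≥ n} = (V, ⋃_{k ≥ n} E_k)`. -/
def Gge (n : ℕ) : SimpleGraph ℚ := fromEdgeSet (⋃ k ≥ n, En k)

/-- Two walks are edge-disjoint if they share no edge. -/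
def WalkEdgeDisjoint {V : Type*} {G : SimpleGraph V} {u v : V}
    (p q : G.Walk u v) : Prop :=
  ∀ e, e ∈ p.edges → e ∉ q.edges

/-- Two lists (of supports of paths) traverse their common entries in the same order. -/
def ListCompat {α : Type*} [DecidableEq α] (l₁ l₂ : List α) : Prop :=
  ∀ x y, x ∈ l₁ → y ∈ l₁ → x ∈ l₂ → y ∈ l₂ →
    (l₁.idxOf x ≤ l₁.idxOf y ↔ l₂.idxOf x ≤ l₂.idxOf y)

/-- The stages `𝒞_n` of the Cantor set construction, as sets of pairs `(a, b)`
representing closed intervals `[a, b] ⊆ ℚ`. -/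
def cantorStage : ℕ → Set (ℚ × ℚ)
  | 0 => {(0, 1)}
  | n + 1 => {p | ∃ q ∈ cantorStage n,
      p = (q.1, q.1 + (q.2 - q.1) / 3) ∨ p = (q.1 + 2 * (q.2 - q.1) / 3, q.2)}

/-- The (rational points of the) Cantor set `C = ⋂_n ⋃ 𝒞_n`. -/
def cantorSetQ : Set ℚ := ⋂ n, ⋃ p ∈ cantorStage n, Set.Icc p.1 p.2

/-- `C*_n`: the endpoints of the intervals of `𝒞_n`. -/
def Cstar (n : ℕ) : Set ℚ := {x | ∃ p ∈ cantorStage n, x = p.1 ∨ x = p.2}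

/-- `E*_n`: the Cantor-derived edges of level `n`. -/
def Estar (n : ℕ) : Set (Sym2 ℚ) :=
  {e | ∃ p ∈ cantorStage (n - 1),
    e = s(p.1, p.1 + 2 * (p.2 - p.1) / 3) ∨
    e = s(p.1 + (p.2 - p.1) / 3, p.1 + 2 * (p.2 - p.1) / 3) ∨
    e = s(p.1 + (p.2 - p.1) / 3, p.2)}

/-- `M_n`: the middle edges `{a + Δ/3, a + 2Δ/3}` for `[a, a+Δ] ∈ 𝒞_{n-1}`. -/
def Mlevel (n : ℕ) : Set (Sym2 ℚ) :=
  {e | ∃ p ∈ cantorStage (n - 1),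
    e = s(p.1 + (p.2 - p.1) / 3, p.1 + 2 * (p.2 - p.1) / 3)}

/-- `C* = ⋃_{n ≥ 1} C*_n`. -/
def CstarU : Set ℚ := ⋃ n ≥ 1, Cstar n

/-- `E* = ⋃_{n ≥ 1} E*_n`. -/
def EstarU : Set (Sym2 ℚ) := ⋃ n ≥ 1, Estar n

/-- The matching `M = ⋃_{n ≥ 1} M_n`. -/
def MU : Set (Sym2 ℚ) := ⋃ n ≥ 1, Mlevel n

/-- The graph `G* = (C*, E*)`, a subgraph of the whirl graph. -/
noncomputable def Gstar : SimpleGraph ℚ := SimpleGraph.fromEdgeSet EstarU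

lemma stage_form : ∀ n : ℕ, ∀ p ∈ cantorStage n,
    ∃ k : ℕ, p = ((k : ℚ) / 3 ^ n, (k : ℚ) / 3 ^ n + 1 / 3 ^ n) := by
  intro n
  induction n with
  | zero =>
    intro p hp
    simp only [cantorStage, Set.mem_singleton_iff] at hp
    exact ⟨0, by simp [hp]⟩
  | succ n ih =>
    rintro p hp
    obtain ⟨q, hq, hcase⟩ := hp
    obtain ⟨k, rfl⟩ := ih q hq
    rcases hcase with h | h
    · refine ⟨3 * k, ?_⟩
      rw [h, Prod.mk.injEq]
      constructor <;> · push_cast; field_simp; ring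
    · refine ⟨3 * k + 2, ?_⟩
      rw [h, Prod.mk.injEq]
      constructor <;> · push_cast; field_simp; ring

lemma key {m n k k' r r' : ℕ} (hr : 0 < r ∧ r < 3) (hr' : 0 < r' ∧ r' < 3)
    (h : ((3 * k + r : ℕ) : ℚ) / 3 ^ (m + 1) = ((3 * k' + r' : ℕ) : ℚ) / 3 ^ (n + 1)) :
    m = n ∧ k = k' ∧ r = r' := by
  have h3m : (3 : ℚ) ^ (m + 1) ≠ 0 := by positivity
  have h3n : (3 : ℚ) ^ (n + 1) ≠ 0 := by positivity
  rw [div_eq_div_iff h3m h3n] at h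
  have h' : (3 * k + r) * 3 ^ (n + 1) = (3 * k' + r') * 3 ^ (m + 1) := by
    exact_mod_cast h
  have haux : ∀ a b c d e f : ℕ, a < b → 0 < f ∧ f < 3 →
      (3 * c + d) * 3 ^ b = (3 * e + f) * 3 ^ a → False := by
    intro a b c d e f hab hf heq
    have hb : 3 ^ b = 3 ^ a * 3 ^ (b - a) := by rw [← pow_add]; congr 1; omega
    rw [hb, ← mul_assoc, mul_comm (3 * c + d) (3 ^ a), mul_assoc,
      mul_comm (3 ^ a)] at heq
    have heq' : (3 * c + d) * 3 ^ (b - a) = 3 * e + f :=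
      Nat.eq_of_mul_eq_mul_right (by positivity) heq
    have hdvd : (3 : ℕ) ∣ (3 * c + d) * 3 ^ (b - a) :=
      Dvd.dvd.mul_left (dvd_pow_self 3 (by omega)) _
    rw [heq'] at hdvd
    omega
  have hmn : m = n := by
    rcases lt_trichotomy m n with hlt | heq | hgt
    · exact absurd h' (fun h'' => haux (m+1) (n+1) k r k' r' (by omega) hr' h'')
    · exact heq
    · exact absurd h' (fun h'' => haux (n+1) (m+1) k' r' k r (by omega) hr h''.symm)
  subst hmn
  have : 3 * k + r = 3 * k' + r' :=
    Nat.eq_of_mul_eq_mul_right (by positivity) h'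
  omega

lemma mlevel_form {n : ℕ} {e : Sym2 ℚ} (he : e ∈ Mlevel (n + 1)) :
    ∃ k : ℕ, e = s(((3 * k + 1 : ℕ) : ℚ) / 3 ^ (n + 1), ((3 * k + 2 : ℕ) : ℚ) / 3 ^ (n + 1)) := by
  obtain ⟨p, hp, hpe⟩ := he
  have hp' : p ∈ cantorStage n := by simpa using hp
  obtain ⟨k, rfl⟩ := stage_form n p hp'
  refine ⟨k, ?_⟩
  have h3 : (3 : ℚ) ^ n ≠ 0 := by positivity
  have h1 : ((k : ℚ) / 3 ^ n) + (((k : ℚ) / 3 ^ n + 1 / 3 ^ n) - (k : ℚ) / 3 ^ n) / 3 =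
      ((3 * k + 1 : ℕ) : ℚ) / 3 ^ (n + 1) := by
    push_cast; field_simp; ring
  have h2 : ((k : ℚ) / 3 ^ n) + 2 * (((k : ℚ) / 3 ^ n + 1 / 3 ^ n) - (k : ℚ) / 3 ^ n) / 3 =
      ((3 * k + 2 : ℕ) : ℚ) / 3 ^ (n + 1) := by
    push_cast; field_simp; ring
  rw [hpe]
  exact congrArg₂ (fun a b => s(a, b)) h1 h2

lemma mlevel_mem_edgeSet {n : ℕ} {e : Sym2 ℚ} (hn : 1 ≤ n) (he : e ∈ Mlevel n) :
    e ∈ Gstar.edgeSet := by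
  obtain ⟨j, rfl⟩ : ∃ j, n = j + 1 := ⟨n - 1, by omega⟩
  rw [Gstar, edgeSet_fromEdgeSet]
  constructor
  · exact Set.mem_biUnion hn (by
      obtain ⟨p, hp, hpe⟩ := he
      exact ⟨p, hp, Or.inr (Or.inl hpe)⟩)
  · obtain ⟨k, rfl⟩ := mlevel_form he
    simp only [Sym2.diagSet, Set.mem_setOf_eq, Sym2.isDiag_iff_proj_eq]
    intro hdiag
    have h3 : (3 : ℚ) ^ (j + 1) ≠ 0 := by positivity
    rw [div_eq_div_iff h3 h3] at hdiag
    have : (3 * k + 1 : ℕ) = (3 * k + 2 : ℕ) := by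
      exact_mod_cast mul_right_cancel₀ h3 hdiag
    omega

lemma mlevel_disjoint {m n : ℕ} {e f : Sym2 ℚ}
    (he : e ∈ Mlevel (m + 1)) (hf : f ∈ Mlevel (n + 1)) (hef : e ≠ f) :
    ∀ z : ℚ, z ∈ e → z ∉ f := by
  obtain ⟨k, rfl⟩ := mlevel_form he
  obtain ⟨k', rfl⟩ := mlevel_form hf
  intro z hz hz'
  rw [Sym2.mem_iff] at hz hz'
  apply hef
  have : m = n ∧ k = k' := by
    rcases hz with rfl | rfl <;> rcases hz' with h | h
    · have := key (r := 1) (r' := 1) (by omega) (by omega) h; omega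
    · have := key (r := 1) (r' := 2) (by omega) (by omega) h; omega
    · have := key (r := 2) (r' := 1) (by omega) (by omega) h; omega
    · have := key (r := 2) (r' := 2) (by omega) (by omega) h; omega
  obtain ⟨rfl, rfl⟩ := this
  rfl

/-- Each `M_n` (`n ≥ 1`) is a set of edges of `G* = (C*, E*)` forming a matching, and
`M = ⋃_{n ≥ 1} M_n` is a matching in `G*` as well. -/
theorem stmt14 :
    (∀ n, 1 ≤ n → Mlevel n ⊆ Gstar.edgeSet) ∧
    (∀ n, 1 ≤ n → (Mlevel n).Pairwise fun e f => ∀ z : ℚ, z ∈ e → z ∉ f) ∧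
    MU ⊆ Gstar.edgeSet ∧
    MU.Pairwise fun e f => ∀ z : ℚ, z ∈ e → z ∉ f := by
  have lvl : ∀ n, 1 ≤ n → ∀ e ∈ Mlevel n, ∃ j, n = j + 1 ∧ e ∈ Mlevel (j + 1) := by
    intro n hn e he
    exact ⟨n - 1, by omega, by rwa [show n - 1 + 1 = n by omega]⟩
  refine ⟨fun n hn e he => mlevel_mem_edgeSet hn he, ?_, ?_, ?_⟩
  · intro n hn e he f hf hef
    obtain ⟨j, hj, he'⟩ := lvl n hn e he
    obtain ⟨j', hj', hf'⟩ := lvl n hn f hf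
    subst hj
    obtain rfl : j' = j := by omega
    exact mlevel_disjoint he' hf' hef
  · intro e he
    obtain ⟨S, ⟨n, rfl⟩, hS⟩ := he
    simp only [Set.mem_iUnion, exists_prop] at hS
    obtain ⟨hn, he⟩ := hS
    exact mlevel_mem_edgeSet hn he
  · intro e he f hf hef
    obtain ⟨S, ⟨n, rfl⟩, hS⟩ := he
    simp only [Set.mem_iUnion, exists_prop] at hS
    obtain ⟨hn, he⟩ := hS
    obtain ⟨S, ⟨n', rfl⟩, hS'⟩ := hf
    simp only [Set.mem_iUnion, exists_prop] at hS'
    obtain ⟨hn', hf⟩ := hS'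
    obtain ⟨j, hj, he'⟩ := lvl n hn e he
    obtain ⟨j', hj', hf'⟩ := lvl n' hn' f hf
    exact mlevel_disjoint he' hf' hef
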